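/- arXiv:1304.7531 — 4 statements merged into one kernel-verified Lean document; each statement's English description precedes it below -/
import Mathlib

section
/- Let h : [0,∞) → [0,∞) be nonincreasing and integrable, and let μ be a locally finite Borel measure on [0,∞) satisfying μ([0,σ]) ≤ ℓ·(1+σ) for all σ ≥ 0, where ℓ > 0. Then for every s ≥ 0, ∫_{[0,∞)} h(s+σ) dμ(σ) ≤ ℓ·h(s) + ℓ·∫_s^∞ h(u) du. -/
open MeasureTheory

/-- If `h : [0,∞) → [0,∞)` is nonincreasing and integrable, and `μ` is a locally finite
Borel measure on `[0,∞)` with `μ [0,σ] ≤ ℓ(1+σ)` for all `σ ≥ 0`, then for every `s ≥ 0`,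
`∫ h(s+σ) dμ(σ) ≤ ℓ h(s) + ℓ ∫_s^∞ h(u) du`. -/
theorem stmt_4 (h : ℝ → ℝ) (hnn : ∀ t, 0 ≤ t → 0 ≤ h t)
    (hanti : AntitoneOn h (Set.Ici 0))
    (hint : IntegrableOn h (Set.Ioi 0))
    (μ : Measure ℝ) [IsLocallyFiniteMeasure μ]
    (ℓ : ℝ) (hℓ : 0 < ℓ)
    (hμ : ∀ σ : ℝ, 0 ≤ σ → μ (Set.Icc 0 σ) ≤ ENNReal.ofReal (ℓ * (1 + σ)))
    (s : ℝ) (hs : 0 ≤ s) :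
    ∫⁻ σ in Set.Ici (0 : ℝ), ENNReal.ofReal (h (s + σ)) ∂μ ≤
      ENNReal.ofReal (ℓ * h s + ℓ * ∫ u in Set.Ioi s, h u) := by
  classical
  -- the modified function, antitone on all of ℝ
  set hm : ℝ → ℝ := fun u => h (max u s) with hm_def
  have hm_anti : Antitone hm := by
    intro u v huv
    exact hanti (le_trans hs (le_max_right u s)) (le_trans hs (le_max_right v s))
      (max_le_max huv le_rfl)
  have hm_nonneg : ∀ u, 0 ≤ hm u := fun u => hnn _ (le_trans hs (le_max_right u s))
  have hm_le : ∀ u, hm u ≤ h s := fun u =>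
    hanti hs (le_trans hs (le_max_right u s)) (le_max_right u s)
  have hm_meas : Measurable hm := hm_anti.measurable
  set f : ℝ → ℝ := fun σ => hm (s + σ) with f_def
  have f_anti : Antitone f := fun a b hab => hm_anti (by linarith)
  have f_meas : Measurable f := hm_meas.comp (measurable_const.add measurable_id)
  have f_nonneg : ∀ σ, 0 ≤ f σ := fun σ => hm_nonneg _
  have f_le : ∀ σ, f σ ≤ h s := fun σ => hm_le _
  have f_eq : ∀ σ, 0 ≤ σ → f σ = h (s + σ) := by
    intro σ hσ
    simp only [f_def, hm_def, max_eq_left (by linarith : s ≤ s + σ)]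
  have hIoi : Set.Ioi s ⊆ Set.Ioi (0:ℝ) := fun x hx => lt_of_le_of_lt hs hx
  have hint_s : IntegrableOn h (Set.Ioi s) := hint.mono_set hIoi
  -- tail smallness from integrability
  have tail : ∀ t : ℝ, 0 < t → ∃ M : ℝ, 0 ≤ M ∧ f M ≤ t := by
    intro t ht
    by_contra hcon
    push_neg at hcon
    have hb : ∀ u ∈ Set.Ioi s, t < h u := by
      intro u hu
      have h0 : (0:ℝ) ≤ u - s := by simp at hu; linarith
      have := hcon (u - s) h0
      rwa [f_eq _ h0, add_sub_cancel] at this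
    have hconst : IntegrableOn (fun _ : ℝ => t) (Set.Ioi s) := by
      refine Integrable.mono hint_s aestronglyMeasurable_const ?_
      refine (ae_restrict_iff' measurableSet_Ioi).2 (Filter.Eventually.of_forall ?_)
      intro u hu
      have h1 := hb u hu
      rw [Real.norm_eq_abs, Real.norm_eq_abs, abs_of_pos ht, abs_of_pos (ht.trans h1)]
      exact h1.le
    rw [integrableOn_const_iff] at hconst
    rcases hconst with h1 | h2
    · exact ht.ne' (enorm_eq_zero.mp h1)
    · simp [Real.volume_Ioi] at h2
  -- the "inverse" function
  set A : ℝ → Set ℝ := fun t => {σ : ℝ | 0 ≤ σ ∧ t < f σ} with A_def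
  set c : ℝ → ℝ := fun t => sSup (insert 0 (A t)) with c_def
  have bddA : ∀ t : ℝ, 0 < t → BddAbove (insert 0 (A t)) := by
    intro t ht
    obtain ⟨M, hM0, hMt⟩ := tail t ht
    refine ⟨M, ?_⟩
    rintro x (rfl | ⟨hx0, hxt⟩)
    · exact hM0
    · by_contra hxM
      push_neg at hxM
      exact absurd (lt_of_lt_of_le hxt (f_anti hxM.le)) (not_lt.2 hMt)
  have c_nonneg : ∀ t : ℝ, 0 < t → 0 ≤ c t := fun t ht =>
    le_csSup (bddA t ht) (Set.mem_insert 0 _)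
  have c_ub : ∀ t : ℝ, 0 < t → ∀ σ ∈ A t, σ ≤ c t := fun t ht σ hσ =>
    le_csSup (bddA t ht) (Set.mem_insert_of_mem _ hσ)
  have c_lt : ∀ t : ℝ, 0 < t → ∀ σ : ℝ, 0 ≤ σ → σ < c t → t < f σ := by
    intro t ht σ hσ0 hσc
    obtain ⟨a, ha, hσa⟩ := exists_lt_of_lt_csSup ⟨0, Set.mem_insert 0 _⟩ hσc
    rcases ha with rfl | ⟨ha0, hat⟩
    · linarith
    · exact lt_of_lt_of_le hat (f_anti hσa.le)
  -- Step A: rewrite in terms of f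
  have stepA : ∫⁻ σ in Set.Ici (0 : ℝ), ENNReal.ofReal (h (s + σ)) ∂μ
      = ∫⁻ σ, ENNReal.ofReal (f σ) ∂(μ.restrict (Set.Ici 0)) := by
    refine setLIntegral_congr_fun measurableSet_Ici ?_
    intro σ hσ
    simp only [f_eq σ hσ]
  -- Step B: layer cake for μ
  have stepB : ∫⁻ σ, ENNReal.ofReal (f σ) ∂(μ.restrict (Set.Ici 0))
      = ∫⁻ t in Set.Ioi (0:ℝ), μ.restrict (Set.Ici 0) {a : ℝ | t < f a} := by
    exact lintegral_eq_lintegral_meas_lt _ (Filter.Eventually.of_forall f_nonneg)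
      f_meas.aemeasurable
  -- Step C: pointwise bound by indicator
  have stepC : ∫⁻ t in Set.Ioi (0:ℝ), μ.restrict (Set.Ici 0) {a : ℝ | t < f a}
      ≤ ∫⁻ t in Set.Ioi (0:ℝ),
          (Set.Ioo (0:ℝ) (h s)).indicator (fun t => ENNReal.ofReal (ℓ * (1 + c t))) t := by
    refine lintegral_mono_ae ((ae_restrict_iff' measurableSet_Ioi).2
      (Filter.Eventually.of_forall ?_))
    intro t ht
    rcases lt_or_ge t (h s) with hth | hth
    · rw [Set.indicator_of_mem (Set.mem_Ioo.2 ⟨ht, hth⟩)]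
      calc μ.restrict (Set.Ici 0) {a : ℝ | t < f a}
          ≤ μ ({a : ℝ | t < f a} ∩ Set.Ici 0) := by
            rw [Measure.restrict_apply' measurableSet_Ici]
        _ ≤ μ (Set.Icc 0 (c t)) := by
            refine measure_mono ?_
            rintro σ ⟨hσt, hσ0⟩
            exact ⟨hσ0, c_ub t ht σ ⟨hσ0, hσt⟩⟩
        _ ≤ ENNReal.ofReal (ℓ * (1 + c t)) := hμ _ (c_nonneg t ht)
    · have : {a : ℝ | t < f a} = ∅ := by
        ext a
        simp only [Set.mem_setOf_eq, Set.mem_empty_iff_false, iff_false, not_lt]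
        exact (f_le a).trans hth
      rw [this]
      simp
  -- Step D: compute the indicator integral
  have stepD : ∫⁻ t in Set.Ioi (0:ℝ),
        (Set.Ioo (0:ℝ) (h s)).indicator (fun t => ENNReal.ofReal (ℓ * (1 + c t))) t
      = ∫⁻ t in Set.Ioo (0:ℝ) (h s), ENNReal.ofReal (ℓ * (1 + c t)) := by
    rw [lintegral_indicator measurableSet_Ioo, Measure.restrict_restrict measurableSet_Ioo,
      Set.inter_eq_left.2 Set.Ioo_subset_Ioi_self]
  -- Step E: split the integrand
  have stepE : ∫⁻ t in Set.Ioo (0:ℝ) (h s), ENNReal.ofReal (ℓ * (1 + c t))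
      ≤ ENNReal.ofReal ℓ *
        (ENNReal.ofReal (h s) + ∫⁻ t in Set.Ioo (0:ℝ) (h s), ENNReal.ofReal (c t)) := by
    have e1 : ∀ t ∈ Set.Ioo (0:ℝ) (h s), ENNReal.ofReal (ℓ * (1 + c t))
        = ENNReal.ofReal ℓ * (1 + ENNReal.ofReal (c t)) := by
      intro t ht
      rw [ENNReal.ofReal_mul hℓ.le, ENNReal.ofReal_add zero_le_one (c_nonneg t ht.1),
        ENNReal.ofReal_one]
    calc ∫⁻ t in Set.Ioo (0:ℝ) (h s), ENNReal.ofReal (ℓ * (1 + c t))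
        = ∫⁻ t in Set.Ioo (0:ℝ) (h s), ENNReal.ofReal ℓ * (1 + ENNReal.ofReal (c t)) := by
          refine lintegral_congr_ae ((ae_restrict_iff' measurableSet_Ioo).2
            (Filter.Eventually.of_forall e1))
      _ = ENNReal.ofReal ℓ * ∫⁻ t in Set.Ioo (0:ℝ) (h s), (1 + ENNReal.ofReal (c t)) :=
          lintegral_const_mul' _ _ ENNReal.ofReal_ne_top
      _ = ENNReal.ofReal ℓ *
          ((∫⁻ _ in Set.Ioo (0:ℝ) (h s), (1:ENNReal))
            + ∫⁻ t in Set.Ioo (0:ℝ) (h s), ENNReal.ofReal (c t)) := by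
          rw [lintegral_add_left measurable_const]
      _ ≤ ENNReal.ofReal ℓ *
          (ENNReal.ofReal (h s) + ∫⁻ t in Set.Ioo (0:ℝ) (h s), ENNReal.ofReal (c t)) := by
          gcongr
          rw [setLIntegral_one, Real.volume_Ioo, sub_zero]
  -- Step F: bound ∫ c by tail volumes
  have stepF : ∫⁻ t in Set.Ioo (0:ℝ) (h s), ENNReal.ofReal (c t)
      ≤ ∫⁻ t in Set.Ioi (0:ℝ), volume ({u : ℝ | t < hm u} ∩ Set.Ioi s) := by
    calc ∫⁻ t in Set.Ioo (0:ℝ) (h s), ENNReal.ofReal (c t)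
        ≤ ∫⁻ t in Set.Ioo (0:ℝ) (h s), volume ({u : ℝ | t < hm u} ∩ Set.Ioi s) := by
          refine lintegral_mono_ae ((ae_restrict_iff' measurableSet_Ioo).2
            (Filter.Eventually.of_forall ?_))
          intro t ht
          have hsub : Set.Ioo s (s + c t) ⊆ {u : ℝ | t < hm u} ∩ Set.Ioi s := by
            rintro u ⟨hu1, hu2⟩
            refine ⟨?_, hu1⟩
            have h0 : (0:ℝ) ≤ u - s := by linarith
            have := c_lt t ht.1 (u - s) h0 (by linarith)
            rw [f_eq _ h0, add_sub_cancel] at this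
            have hmax : max u s = u := max_eq_left (by linarith)
            simpa [hm_def, hmax] using this
          calc ENNReal.ofReal (c t) = volume (Set.Ioo s (s + c t)) := by
                rw [Real.volume_Ioo]; ring_nf
            _ ≤ volume ({u : ℝ | t < hm u} ∩ Set.Ioi s) := measure_mono hsub
      _ ≤ ∫⁻ t in Set.Ioi (0:ℝ), volume ({u : ℝ | t < hm u} ∩ Set.Ioi s) :=
          lintegral_mono_set Set.Ioo_subset_Ioi_self
  -- Step G: reverse layer cake for Lebesgue measure
  have stepG : ∫⁻ t in Set.Ioi (0:ℝ), volume ({u : ℝ | t < hm u} ∩ Set.Ioi s)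
      = ENNReal.ofReal (∫ u in Set.Ioi s, h u) := by
    have e1 : ∀ t : ℝ, volume ({u : ℝ | t < hm u} ∩ Set.Ioi s)
        = (volume.restrict (Set.Ioi s)) {u : ℝ | t < hm u} := by
      intro t
      rw [Measure.restrict_apply' measurableSet_Ioi]
    calc ∫⁻ t in Set.Ioi (0:ℝ), volume ({u : ℝ | t < hm u} ∩ Set.Ioi s)
        = ∫⁻ t in Set.Ioi (0:ℝ), (volume.restrict (Set.Ioi s)) {u : ℝ | t < hm u} := by
          exact lintegral_congr fun t => e1 t
      _ = ∫⁻ u, ENNReal.ofReal (hm u) ∂(volume.restrict (Set.Ioi s)) :=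
          (lintegral_eq_lintegral_meas_lt _ (Filter.Eventually.of_forall hm_nonneg)
            hm_meas.aemeasurable).symm
      _ = ∫⁻ u in Set.Ioi s, ENNReal.ofReal (h u) := by
          refine setLIntegral_congr_fun measurableSet_Ioi ?_
          intro u hu
          have : max u s = u := max_eq_left (le_of_lt hu)
          simp [hm_def, this]
      _ = ENNReal.ofReal (∫ u in Set.Ioi s, h u) := by
          rw [← ofReal_integral_eq_lintegral_ofReal hint_s]
          exact (ae_restrict_iff' measurableSet_Ioi).2
            (Filter.Eventually.of_forall fun u hu => hnn u (hs.trans hu.le))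
  -- combine
  have hints_nonneg : 0 ≤ ∫ u in Set.Ioi s, h u := by
    refine integral_nonneg_of_ae ((ae_restrict_iff' measurableSet_Ioi).2
      (Filter.Eventually.of_forall fun u hu => hnn u (hs.trans hu.le)))
  calc ∫⁻ σ in Set.Ici (0 : ℝ), ENNReal.ofReal (h (s + σ)) ∂μ
      ≤ ENNReal.ofReal ℓ *
        (ENNReal.ofReal (h s) + ENNReal.ofReal (∫ u in Set.Ioi s, h u)) := by
        rw [stepA, stepB]
        refine le_trans stepC ?_
        rw [stepD]
        refine le_trans stepE ?_
        gcongr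
        rw [← stepG]
        exact stepF
    _ = ENNReal.ofReal (ℓ * h s + ℓ * ∫ u in Set.Ioi s, h u) := by
        rw [← ENNReal.ofReal_add (hnn s hs) hints_nonneg, ← ENNReal.ofReal_mul hℓ.le, mul_add]
end

section
/- Let ν > 0 and 0 ≤ m < 1, and define I : [0,∞) → ℝ by I(x) = x·log(x/(ν + x·m)) − x + x·m + ν for x > 0 and I(0) = ν. Then I(x) ≥ 0 for all x ≥ 0, I is convex on [0,∞), and I(x) = 0 if and only if x = ν/(1−m). -/
open Real Set

/-- Key pointwise inequality: for `a, b > 0`, `a * log (a/b) - a + b ≥ 0`. -/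
lemma bt_key_nonneg {a b : ℝ} (ha : 0 < a) (hb : 0 < b) :
    0 ≤ a * Real.log (a / b) - a + b := by
  have h : Real.log (b / a) ≤ b / a - 1 := Real.log_le_sub_one_of_pos (by positivity)
  have hlog : Real.log (a / b) = - Real.log (b / a) := by
    rw [← Real.log_inv, inv_div]
  have := mul_le_mul_of_nonneg_left h ha.le
  rw [hlog]
  have : a * (b / a) = b := by field_simp
  nlinarith [mul_le_mul_of_nonneg_left h ha.le]

lemma bt_key_pos {a b : ℝ} (ha : 0 < a) (hb : 0 < b) (hne : a ≠ b) :
    0 < a * Real.log (a / b) - a + b := by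
  have hba : b / a ≠ 1 := by
    intro h
    apply hne
    field_simp at h
    linarith
  have h : Real.log (b / a) < b / a - 1 :=
    Real.log_lt_sub_one_of_pos (by positivity) hba
  have hlog : Real.log (a / b) = - Real.log (b / a) := by
    rw [← Real.log_inv, inv_div]
  rw [hlog]
  have habs : a * (b / a) = b := by field_simp
  nlinarith [mul_lt_mul_of_pos_left h ha]

/-- The Bordenave–Torrisi rate function `I(x) = x log(x/(ν+xm)) − x + xm + ν` (with
`I(0) = ν`) is nonnegative on `[0,∞)`, convex on `[0,∞)`, and vanishes exactly at
`x = ν/(1−m)`. -/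
theorem stmt_7 (ν m : ℝ) (hν : 0 < ν) (hm0 : 0 ≤ m) (hm1 : m < 1)
    (I : ℝ → ℝ) (hI0 : I 0 = ν)
    (hIpos : ∀ x : ℝ, 0 < x →
      I x = x * Real.log (x / (ν + x * m)) - x + x * m + ν) :
    (∀ x : ℝ, 0 ≤ x → 0 ≤ I x) ∧
    ConvexOn ℝ (Set.Ici 0) I ∧
    (∀ x : ℝ, 0 ≤ x → (I x = 0 ↔ x = ν / (1 - m))) := by
  have h1m : 0 < 1 - m := by linarith
  have hb : ∀ x : ℝ, 0 ≤ x → 0 < ν + x * m := fun x hx => by positivity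
  -- nonnegativity
  have hnn : ∀ x : ℝ, 0 ≤ x → 0 ≤ I x := by
    intro x hx
    rcases hx.eq_or_lt with h | h
    · rw [← h, hI0]; exact hν.le
    · rw [hIpos x h]
      have := bt_key_nonneg h (hb x hx)
      linarith
  refine ⟨hnn, ?_, ?_⟩
  · -- Convexity
    set g : ℝ → ℝ := fun x => x * Real.log x - x * Real.log (ν + x * m) + (m - 1) * x + ν
      with hgdef
    have hEq : Set.EqOn I g (Set.Ici 0) := by
      intro x hx
      rcases (Set.mem_Ici.mp hx).eq_or_lt with h | h
      · simp [hgdef, ← h, hI0]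
      · rw [hIpos x h, hgdef]
        simp only
        rw [Real.log_div h.ne' (hb x hx).ne']
        ring
    -- derivative data
    set G' : ℝ → ℝ := fun x =>
      Real.log x + 1 - (Real.log (ν + x * m) + x * m / (ν + x * m)) + (m - 1) with hG'def
    have hinner : ∀ x : ℝ, HasDerivAt (fun y : ℝ => ν + y * m) m x := by
      intro x
      simpa using ((hasDerivAt_id x).mul_const m).const_add ν
    have hlog2 : ∀ x : ℝ, 0 < x → HasDerivAt (fun y : ℝ => Real.log (ν + y * m))
        ((ν + x * m)⁻¹ * m) x := by
      intro x hx
      exact (Real.hasDerivAt_log (hb x hx.le).ne').comp x (hinner x)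
    have hg' : ∀ x : ℝ, 0 < x → HasDerivAt g (G' x) x := by
      intro x hx
      have h1 : HasDerivAt (fun y : ℝ => y * Real.log y) (Real.log x + 1) x :=
        Real.hasDerivAt_mul_log hx.ne'
      have h2 : HasDerivAt (fun y : ℝ => y * Real.log (ν + y * m))
          (1 * Real.log (ν + x * m) + x * ((ν + x * m)⁻¹ * m)) x :=
        (hasDerivAt_id x).mul (hlog2 x hx)
      have h3 : HasDerivAt (fun y : ℝ => (m - 1) * y) (m - 1) x := by
        simpa using (hasDerivAt_id x).const_mul (m - 1)
      have := (((h1.sub h2).add h3).add_const ν)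
      refine HasDerivAt.congr_deriv this ?_
      rw [hG'def]
      have hbne := (hb x hx.le).ne'
      first
      | (field_simp; ring)
      | field_simp
    have hG'' : ∀ x : ℝ, 0 < x →
        HasDerivAt G' (x⁻¹ - ((ν + x * m)⁻¹ * m +
          (m * (ν + x * m) - x * m * m) / (ν + x * m) ^ 2)) x := by
      intro x hx
      have hbne := (hb x hx.le).ne'
      have h1 : HasDerivAt (fun y : ℝ => Real.log y + 1) (x⁻¹) x :=
        (Real.hasDerivAt_log hx.ne').add_const 1
      have h2 : HasDerivAt (fun y : ℝ => y * m) m x := by simpa using (hasDerivAt_id x).mul_const m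
      have h3 : HasDerivAt (fun y : ℝ => y * m / (ν + y * m))
          ((m * (ν + x * m) - x * m * m) / (ν + x * m) ^ 2) x :=
        h2.div (hinner x) hbne
      have := ((h1.sub ((hlog2 x hx).add h3)).add_const (m - 1))
      exact this
    have hopen : Set.Ioi (0:ℝ) ∈ nhds 1 → True := fun _ => trivial
    have hderiv_eq : ∀ x : ℝ, 0 < x → deriv g x = G' x := fun x hx => (hg' x hx).deriv
    have hev : ∀ x : ℝ, 0 < x → deriv g =ᶠ[nhds x] G' := by
      intro x hx
      filter_upwards [IsOpen.mem_nhds isOpen_Ioi hx] with y hy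
      exact hderiv_eq y hy
    have hcont : ContinuousOn g (Set.Ici 0) := by
      apply ContinuousOn.add
      apply ContinuousOn.add
      apply ContinuousOn.sub
      · exact Real.continuous_mul_log.continuousOn
      · intro x hx
        apply ContinuousAt.continuousWithinAt
        have hc : ContinuousAt (fun y : ℝ => ν + y * m) x := by fun_prop
        have : ContinuousAt (fun y : ℝ => Real.log (ν + y * m)) x :=
          ContinuousAt.log hc (hb x hx).ne'
        exact continuousAt_id.mul this
      · fun_prop
      · fun_prop
    refine (ConvexOn.congr ?_ (hEq.symm))
    apply convexOn_of_deriv2_nonneg (convex_Ici 0) hcont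
    · intro x hx
      rw [interior_Ici] at hx
      exact ((hg' x hx).differentiableAt).differentiableWithinAt
    · intro x hx
      rw [interior_Ici] at hx
      exact (((hG'' x hx).differentiableAt).congr_of_eventuallyEq (hev x hx)).differentiableWithinAt
    · intro x hx
      rw [interior_Ici] at hx
      have h2 : deriv (deriv g) x = x⁻¹ - ((ν + x * m)⁻¹ * m +
          (m * (ν + x * m) - x * m * m) / (ν + x * m) ^ 2) := by
        rw [Filter.EventuallyEq.deriv_eq (hev x hx)]
        exact (hG'' x hx).deriv
      have hxpos : (0:ℝ) < x := hx
      have hbx := hb x hx.le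
      have key : x⁻¹ - ((ν + x * m)⁻¹ * m +
          (m * (ν + x * m) - x * m * m) / (ν + x * m) ^ 2)
          = ν ^ 2 / (x * (ν + x * m) ^ 2) := by
        field_simp [hxpos.ne', hbx.ne']
        ring
      show 0 ≤ deriv^[2] g x
      rw [Function.iterate_succ, Function.iterate_one, Function.comp_apply, h2, key]
      positivity
  · -- zero characterization
    intro x hx
    rcases hx.eq_or_lt with h | h
    · subst h
      constructor
      · intro h0; rw [hI0] at h0; linarith
      · intro h0
        exfalso
        have : (0:ℝ) < ν / (1 - m) := by positivity
        rw [← h0] at this; linarith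
    · constructor
      · intro h0
        by_contra hne
        have hxb : x ≠ ν + x * m := by
          intro hxb
          apply hne
          field_simp
          linarith
        have := bt_key_pos h (hb x h.le) hxb
        rw [hIpos x h] at h0
        linarith
      · intro h0
        have hxb : x = ν + x * m := by
          rw [h0]; field_simp; ring
        rw [hIpos x h, ← hxb, div_self h.ne']
        simp
        linarith
end

section
/- Let 0 < α < β and ν > 0. Set h(t) = α·e^{−βt}, μ̄ = ν·β/(β−α), and μ(τ) = (ν·α·β·(2β−α)/(2(β−α)²))·e^{−(β−α)τ} for τ > 0. Then μ satisfies the integral equation μ(τ) = μ̄·h(τ) + ∫₀^∞ h(τ+v)·μ(v) dv + ∫₀^τ h(τ−v)·μ(v) dv for all τ > 0. -/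
open MeasureTheory

lemma exp_Ioi_aux (c : ℝ) (hc : 0 < c) :
    (∫ x in Set.Ioi (0:ℝ), Real.exp (-(c * x))) = 1 / c := by
  have := MeasureTheory.integral_comp_mul_left_Ioi (fun x => Real.exp (-x)) 0 hc
  simp only [mul_zero, integral_exp_neg_Ioi, neg_zero, Real.exp_zero, smul_eq_mul,
    mul_one] at this
  rw [this, one_div]

lemma exp_interval_aux (c τ : ℝ) (hc : c ≠ 0) :
    (∫ v in (0:ℝ)..τ, Real.exp (c * v)) = (Real.exp (c * τ) - 1) / c := by
  have := intervalIntegral.integral_comp_mul_left (a := (0:ℝ)) (b := τ) Real.exp hc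
  rw [this, integral_exp]
  simp only [smul_eq_mul, mul_zero, Real.exp_zero]
  field_simp

/-- For `0 < α < β`, `ν > 0`, with `h(t) = α e^{−βt}`, `μ̄ = νβ/(β−α)` and
`μ(τ) = (ναβ(2β−α)/(2(β−α)²)) e^{−(β−α)τ}`, the covariance equation
`μ(τ) = μ̄ h(τ) + ∫₀^∞ h(τ+v) μ(v) dv + ∫₀^τ h(τ−v) μ(v) dv` holds for all `τ > 0`. -/
theorem stmt_14 (α β ν : ℝ) (hα : 0 < α) (hαβ : α < β) (hν : 0 < ν)
    (h : ℝ → ℝ) (hh : ∀ t, h t = α * Real.exp (-β * t))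
    (μbar : ℝ) (hμbar : μbar = ν * β / (β - α))
    (μ : ℝ → ℝ)
    (hμ : ∀ τ, μ τ = ν * α * β * (2 * β - α) / (2 * (β - α) ^ 2) *
      Real.exp (-(β - α) * τ)) :
    ∀ τ : ℝ, 0 < τ →
      μ τ = μbar * h τ + (∫ v in Set.Ioi (0:ℝ), h (τ + v) * μ v) +
        ∫ v in (0:ℝ)..τ, h (τ - v) * μ v := by
  intro τ hτ
  set C := ν * α * β * (2 * β - α) / (2 * (β - α) ^ 2) with hC
  have hba : (0:ℝ) < β - α := by linarith
  have h2ba : (0:ℝ) < 2 * β - α := by linarith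
  have h1 : (∫ v in Set.Ioi (0:ℝ), h (τ + v) * μ v)
      = α * C * Real.exp (-β * τ) * (1 / (2 * β - α)) := by
    have e : ∀ v : ℝ, h (τ + v) * μ v
        = α * C * Real.exp (-β * τ) * Real.exp (-((2 * β - α) * v)) := by
      intro v
      rw [hh, hμ]
      rw [show α * Real.exp (-β * (τ + v)) * (C * Real.exp (-(β - α) * v))
          = α * C * (Real.exp (-β * (τ + v)) * Real.exp (-(β - α) * v)) by ring,
        ← Real.exp_add,
        show (-β * (τ + v) + -(β - α) * v) = (-β * τ) + (-((2 * β - α) * v)) by ring,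
        Real.exp_add]
      ring
    simp_rw [e]
    rw [MeasureTheory.integral_const_mul, exp_Ioi_aux _ h2ba]
  have h2 : (∫ v in (0:ℝ)..τ, h (τ - v) * μ v)
      = C * Real.exp (-(β - α) * τ) - C * Real.exp (-β * τ) := by
    have e : ∀ v : ℝ, h (τ - v) * μ v
        = α * C * Real.exp (-β * τ) * Real.exp (α * v) := by
      intro v
      rw [hh, hμ]
      rw [show α * Real.exp (-β * (τ - v)) * (C * Real.exp (-(β - α) * v))
          = α * C * (Real.exp (-β * (τ - v)) * Real.exp (-(β - α) * v)) by ring,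
        ← Real.exp_add,
        show (-β * (τ - v) + -(β - α) * v) = (-β * τ) + α * v by ring,
        Real.exp_add]
      ring
    simp_rw [e]
    rw [intervalIntegral.integral_const_mul, exp_interval_aux _ _ hα.ne']
    rw [show -(β - α) * τ = α * τ + -β * τ by ring, Real.exp_add]
    field_simp
  rw [h1, h2, hμ, hh, hμbar, hC]
  have hexp := Real.exp_pos (-β * τ)
  have h2ne : β * 2 - α ≠ 0 := by linarith
  field_simp [hC]
  ring
end

section
/- Let ψ : [0,∞) → [0,∞) be concave and nondecreasing, let a, ν > 0, and define λ(z) = z − ψ(z) + ν (assumed nonnegative). Define the generator A f(z) = −a·z·f'(z) + λ(z)·(f(z+a) − f(z)), and let V(z) = z + 1 and φ(v) = a·(ψ(v) − ψ(0)). Then for all z ≥ 0, A V(z) + φ(V(z)) ≤ a·ψ(1) − 2a·ψ(0) + a·ν. -/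
/-- Lyapunov drift estimate for the critical Markovian Hawkes process: with
`ψ : [0,∞) → [0,∞)` concave nondecreasing, `λ(z) = z − ψ(z) + ν ≥ 0`,
generator `A f(z) = −a z f'(z) + λ(z)(f(z+a) − f(z))`, `V(z) = z+1` and
`φ(v) = a(ψ(v) − ψ(0))`, one has `A V(z) + φ(V(z)) ≤ a ψ(1) − 2a ψ(0) + a ν`
for all `z ≥ 0`. -/
theorem stmt_18 (ψ : ℝ → ℝ) (hψnn : ∀ z : ℝ, 0 ≤ z → 0 ≤ ψ z)
    (hψconc : ConcaveOn ℝ (Set.Ici 0) ψ) (hψmono : MonotoneOn ψ (Set.Ici 0))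
    (a ν : ℝ) (ha : 0 < a) (hν : 0 < ν)
    (lam : ℝ → ℝ) (hlam : ∀ z, lam z = z - ψ z + ν)
    (hlamnn : ∀ z : ℝ, 0 ≤ z → 0 ≤ lam z)
    (V : ℝ → ℝ) (hV : ∀ z, V z = z + 1)
    (φ : ℝ → ℝ) (hφ : ∀ v, φ v = a * (ψ v - ψ 0))
    (AV : ℝ → ℝ)
    (hAV : ∀ z, AV z = -a * z * deriv V z + lam z * (V (z + a) - V z)) :
    ∀ z : ℝ, 0 ≤ z → AV z + φ (V z) ≤ a * ψ 1 - 2 * a * ψ 0 + a * ν := by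
  intro z hz
  have hVfun : V = fun z => z + 1 := funext hV
  have hderiv : deriv V z = 1 := by
    rw [hVfun]
    simp
  -- key concavity inequality: ψ(z+1) + ψ 0 ≤ ψ z + ψ 1
  have hkey : ψ (z + 1) + ψ 0 ≤ ψ z + ψ 1 := by
    have hz1 : (0:ℝ) < z + 1 := by linarith
    set t : ℝ := 1 / (z + 1) with ht
    have ht0 : 0 ≤ t := by positivity
    have ht1 : t ≤ 1 := by
      rw [ht, div_le_one hz1]; linarith
    have h1t : 0 ≤ 1 - t := by linarith
    have hmem1 : (z + 1) ∈ Set.Ici (0:ℝ) := le_of_lt hz1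
    have hmem0 : (0:ℝ) ∈ Set.Ici (0:ℝ) := Set.mem_Ici.mpr le_rfl
    have hA := hψconc.2 hmem1 hmem0 ht0 h1t (by ring)
    have hB := hψconc.2 hmem1 hmem0 h1t ht0 (by ring)
    have htz : t * (z + 1) = 1 := by
      rw [ht]; field_simp
    have htz' : (1 - t) * (z + 1) = z := by
      have : (1 - t) * (z + 1) = (z + 1) - t * (z + 1) := by ring
      rw [this, htz]; ring
    rw [smul_eq_mul, smul_eq_mul, smul_eq_mul, smul_eq_mul, mul_zero, add_zero,
      htz] at hA
    rw [smul_eq_mul, smul_eq_mul, smul_eq_mul, smul_eq_mul, mul_zero, add_zero,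
      htz'] at hB
    nlinarith [hA, hB]
  have hVz : V z = z + 1 := hV z
  have hVza : V (z + a) = z + a + 1 := hV (z + a)
  rw [hAV z, hφ (V z), hVz, hVza, hderiv, hlam z]
  have : (z - ψ z + ν) * (z + a + 1 - (z + 1)) = a * (z - ψ z + ν) := by ring
  nlinarith [hkey, ha.le]
end
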